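/- Let {A_n} be a sequence of Wigner(n,1) matrices with E|X_{12}|⁴ < ∞ and E[X_{11}²] < ∞, let c > 0 with σ(c) > 0, let Ã_n be the truncation of A_n at level c, and set Â_n := A_n − σ(c)·Ã_n. Then almost surely lim_{n→∞} ‖Â_n‖₂² = Var(X_{12}·𝟙_{|X_{12}|>c}), and almost surely lim_{n→∞} ‖Ã_n‖₂ = 1. -/

import Mathlib

open MeasureTheory ProbabilityTheory Matrix Filter Finset

/-- A family (indexed by `L`) of mutually independent infinite entry arrays of
`Wigner(n,1)` matrices: the array is Hermitian (`X_{ji} = conj X_{ij}`), the upper-triangular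
entries (diagonal included) form a mutually independent family across the whole family of
arrays, the strictly-upper entries of each array are identically distributed with mean `0`
and variance `1`, and the diagonal entries of each array are identically distributed and
real-valued. -/
structure IsWignerEntries {Ω : Type*} [MeasurableSpace Ω] (P : MeasureTheory.Measure Ω)
    {L : Type*} (X : L → ℕ → ℕ → Ω → ℂ) : Prop where
  meas : ∀ l i j, Measurable (X l i j)
  herm : ∀ l i j ω, X l j i ω = starRingEnd ℂ (X l i j ω)
  indep : ProbabilityTheory.iIndepFun
    (fun q : L × {q : ℕ × ℕ // q.1 ≤ q.2} => X q.1 q.2.1.1 q.2.1.2) P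
  offdiag_distrib : ∀ l i j, i < j → P.map (X l i j) = P.map (X l 0 1)
  diag_distrib : ∀ l i, P.map (X l i i) = P.map (X l 0 0)
  diag_real : ∀ l i ω, (X l i i ω).im = 0
  mean_zero : ∀ l, ∫ ω, X l 0 1 ω ∂P = 0
  var_one : ∀ l, ∫ ω, ‖X l 0 1 ω‖ ^ 2 ∂P = 1

/-- The `n × n` Wigner matrix built from the entry array: `A_n = (1/√n)(X_{ij})_{i,j<n}`. -/
noncomputable def wignerMat {Ω : Type*} {L : Type*} (X : L → ℕ → ℕ → Ω → ℂ) (l : L)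
    (n : ℕ) (ω : Ω) : Matrix (Fin n) (Fin n) ℂ :=
  Matrix.of fun i j => (Real.sqrt n : ℂ)⁻¹ * X l i.val j.val ω
/-- The "variance" `E‖Y − EY‖²` of a complex random variable. -/
noncomputable def cVar {Ω : Type*} [MeasurableSpace Ω] (P : MeasureTheory.Measure Ω)
    (Y : Ω → ℂ) : ℝ :=
  ∫ ω, ‖Y ω - ∫ ω', Y ω' ∂P‖ ^ 2 ∂P

/-- `z·𝟙_{‖z‖ ≤ c}`. -/
noncomputable def truncBelow (c : ℝ) (z : ℂ) : ℂ := if ‖z‖ ≤ c then z else 0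

/-- `z·𝟙_{‖z‖ > c}`. -/
noncomputable def truncAbove (c : ℝ) (z : ℂ) : ℂ := if ‖z‖ ≤ c then 0 else z

/-- `σ²(c) = Var(X₁₂·𝟙_{|X₁₂| ≤ c})` for the entry array `X`. -/
noncomputable def sigma2 {Ω : Type*} [MeasurableSpace Ω] (P : MeasureTheory.Measure Ω)
    (Y : Ω → ℂ) (c : ℝ) : ℝ :=
  cVar P (fun ω => truncBelow c (Y ω))

/-- The truncation at level `c` of the Wigner matrix with entry array `X`: zero diagonal and
off-diagonal entries `(X_{ij}·𝟙_{|X_{ij}|≤c} − E[X_{ij}·𝟙_{|X_{ij}|≤c}])/σ(c)`, scaled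
by `1/√n`. -/
noncomputable def truncMat {Ω : Type*} [MeasurableSpace Ω] (P : MeasureTheory.Measure Ω)
    (X : ℕ → ℕ → Ω → ℂ) (c : ℝ) (n : ℕ) (ω : Ω) : Matrix (Fin n) (Fin n) ℂ :=
  Matrix.of fun i j =>
    if i = j then 0
    else (Real.sqrt n : ℂ)⁻¹ * (Real.sqrt (sigma2 P (X 0 1) c) : ℂ)⁻¹ *
      (truncBelow c (X i.val j.val ω) - ∫ ω', truncBelow c (X i.val j.val ω') ∂P)
/-- The normalized Schatten 2-norm `‖M‖₂ = (tr_n(MᴴM))^{1/2} = ((1/n)∑_{i,j}‖M_{ij}‖²)^{1/2}`. -/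
noncomputable def schatten2 {n : ℕ} (M : Matrix (Fin n) (Fin n) ℂ) : ℝ :=
  Real.sqrt ((n : ℝ)⁻¹ * ∑ i : Fin n, ∑ j : Fin n, ‖M i j‖ ^ 2)

namespace Stmt18

open Topology

/-! ### Pair enumeration -/

def T : ℕ → ℕ
  | 0 => 0
  | n+1 => T n + n

lemma T_mono : Monotone T := monotone_nat_of_le_succ fun n => by simp [T]

lemma le_T_succ (n : ℕ) : n ≤ T (n+1) := by
  induction n with
  | zero => simp [T]
  | succ n ih => simp only [T]; omega

lemma exists_jT (k : ℕ) : ∃ j, k < T (j+1) := ⟨k+1, by have := le_T_succ (k+1); omega⟩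

def jOf (k : ℕ) : ℕ := Nat.find (exists_jT k)

def iOf (k : ℕ) : ℕ := k - T (jOf k)

lemma jOf_spec (k : ℕ) : k < T (jOf k + 1) := Nat.find_spec (exists_jT k)

lemma jOf_min {k j : ℕ} (h : j < jOf k) : ¬ k < T (j+1) := Nat.find_min (exists_jT k) h

lemma T_jOf_le (k : ℕ) : T (jOf k) ≤ k := by
  rcases Nat.eq_zero_or_pos (jOf k) with h | h
  · simp [h, T]
  · have := jOf_min (k := k) (j := jOf k - 1) (by omega)
    have e : jOf k - 1 + 1 = jOf k := by omega
    rw [e] at this; omega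

lemma iOf_lt_jOf (k : ℕ) : iOf k < jOf k := by
  have h1 := jOf_spec k
  have h2 := T_jOf_le k
  have : T (jOf k + 1) = T (jOf k) + jOf k := rfl
  unfold iOf; omega

lemma T_add_iOf (k : ℕ) : T (jOf k) + iOf k = k := by
  have := T_jOf_le k; unfold iOf; omega

lemma jOf_enc {i j : ℕ} (h : i < j) : jOf (T j + i) = j := by
  rw [jOf, Nat.find_eq_iff]
  constructor
  · have : T (j+1) = T j + j := rfl
    omega
  · intro m hm
    have : T (m+1) ≤ T j := T_mono (by omega)
    omega

lemma iOf_enc {i j : ℕ} (h : i < j) : iOf (T j + i) = i := by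
  rw [iOf, jOf_enc h]; omega

lemma enc_injective {k l : ℕ} (h : iOf k = iOf l) (h' : jOf k = jOf l) : k = l := by
  have := T_add_iOf k; have := T_add_iOf l; rw [h, h'] at *; omega

lemma sum_range_add {M : Type*} [AddCommMonoid M] (g : ℕ → M) (a b : ℕ) :
    ∑ k ∈ range (a + b), g k = ∑ k ∈ range a, g k + ∑ i ∈ range b, g (a + i) := by
  induction b with
  | zero => simp
  | succ b ih => rw [← Nat.add_assoc, sum_range_succ, ih, sum_range_succ, add_assoc]

lemma sum_T (f : ℕ → ℕ → ℝ) (n : ℕ) :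
    ∑ k ∈ range (T n), f (iOf k) (jOf k) = ∑ j ∈ range n, ∑ i ∈ range j, f i j := by
  induction n with
  | zero => simp [T]
  | succ n ih =>
    have : T (n+1) = T n + n := rfl
    rw [this, sum_range_add, ih, sum_range_succ]
    congr 1
    refine Finset.sum_congr rfl fun i hi => ?_
    have hi' : i < n := mem_range.mp hi
    rw [iOf_enc hi', jOf_enc hi']

lemma sym_sum (g : ℕ → ℕ → ℝ) (hg : ∀ i j, g i j = g j i) (n : ℕ) :
    ∑ i ∈ range n, ∑ j ∈ range n, g i j
      = ∑ i ∈ range n, g i i + 2 * ∑ j ∈ range n, ∑ i ∈ range j, g i j := by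
  induction n with
  | zero => simp
  | succ n ih =>
    simp only [sum_range_succ, sum_add_distrib]
    rw [ih]
    have : ∑ j ∈ range n, g n j = ∑ j ∈ range n, g j n :=
      Finset.sum_congr rfl fun j _ => hg n j
    rw [this]; ring

lemma two_T (n : ℕ) : 2 * T n + n = n * n := by
  induction n with
  | zero => rfl
  | succ n ih => show 2 * (T n + n) + (n+1) = (n+1)*(n+1); nlinarith [ih]

lemma jOf_zero : jOf 0 = 1 := by
  rw [jOf, Nat.find_eq_iff]
  exact ⟨by norm_num [T], fun m hm => by interval_cases m; simp [T]⟩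

lemma iOf_zero : iOf 0 = 0 := by rw [iOf, jOf_zero]; rfl

lemma T_tendsto : Filter.Tendsto T Filter.atTop Filter.atTop := by
  apply Filter.tendsto_atTop_atTop.mpr
  intro b
  exact ⟨b + 1, fun a ha => le_trans (le_T_succ b) (T_mono (by omega))⟩

/-! ### truncation function facts -/

lemma measurable_truncBelow (c : ℝ) : Measurable (truncBelow c) :=
  Measurable.ite (measurableSet_le measurable_norm measurable_const)
    measurable_id measurable_const

lemma measurable_truncAbove (c : ℝ) : Measurable (truncAbove c) :=
  Measurable.ite (measurableSet_le measurable_norm measurable_const)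
    measurable_const measurable_id

lemma truncBelow_add_truncAbove (c : ℝ) (z : ℂ) : truncBelow c z + truncAbove c z = z := by
  unfold truncBelow truncAbove; split <;> simp

lemma norm_truncBelow_le {c : ℝ} (hc : 0 ≤ c) (z : ℂ) : ‖truncBelow c z‖ ≤ c := by
  unfold truncBelow; split <;> simpa

lemma norm_truncAbove_le (c : ℝ) (z : ℂ) : ‖truncAbove c z‖ ≤ ‖z‖ := by
  unfold truncAbove; split <;> simp

lemma truncBelow_conj (c : ℝ) (z : ℂ) :
    truncBelow c (starRingEnd ℂ z) = starRingEnd ℂ (truncBelow c z) := by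
  unfold truncBelow; rw [RCLike.norm_conj]; split <;> simp

lemma truncAbove_conj (c : ℝ) (z : ℂ) :
    truncAbove c (starRingEnd ℂ z) = starRingEnd ℂ (truncAbove c z) := by
  unfold truncAbove; rw [RCLike.norm_conj]; split <;> simp

/-! ### deterministic limit combination -/

lemma lim_combine (D S : ℕ → ℝ) (EW μ : ℝ)
    (hD : Tendsto (fun n : ℕ => D n / n) atTop (𝓝 EW))
    (hS : Tendsto (fun N : ℕ => S N / N) atTop (𝓝 μ)) :
    Tendsto (fun n : ℕ => ((n : ℝ) * n)⁻¹ * (D n + 2 * S (T n))) atTop (𝓝 μ) := by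
  have h1 : Tendsto (fun n : ℕ => ((n : ℝ))⁻¹ * (D n / n)) atTop (𝓝 (0 * EW)) :=
    tendsto_inv_atTop_nhds_zero_nat.mul hD
  have h2 : Tendsto (fun n : ℕ => (1 - (n : ℝ)⁻¹) * (S (T n) / (T n))) atTop (𝓝 ((1 - 0) * μ)) :=
    (tendsto_const_nhds.sub tendsto_inv_atTop_nhds_zero_nat).mul (hS.comp T_tendsto)
  have h3 := h1.add h2
  have h4 : (0 : ℝ) * EW + (1 - 0) * μ = μ := by ring
  rw [h4] at h3
  refine h3.congr' ?_
  filter_upwards [eventually_ge_atTop 2] with n hn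
  have hn0 : (n : ℝ) ≠ 0 := by positivity
  have hT1 : 1 ≤ T n := le_trans (by norm_num [T]) (T_mono hn)
  have hT0 : (T n : ℝ) ≠ 0 := by
    have : (0:ℝ) < T n := by exact_mod_cast hT1
    positivity
  have h2T : 2 * (T n : ℝ) + n = n * n := by exact_mod_cast two_T n
  field_simp
  linear_combination (-(S (T n))) * h2T


lemma schatten2_sq {n : ℕ} (M : Matrix (Fin n) (Fin n) ℂ) (g : ℕ → ℕ → ℝ)
    (hM : ∀ i j : Fin n, ‖M i j‖ ^ 2 = (n : ℝ)⁻¹ * g i.val j.val)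
    (hg : ∀ i j, g i j = g j i) :
    schatten2 M ^ 2
      = ((n : ℝ) * n)⁻¹ *
        ((∑ i ∈ range n, g i i) + 2 * ∑ k ∈ range (T n), g (iOf k) (jOf k)) := by
  have h0 : 0 ≤ (n : ℝ)⁻¹ * ∑ i : Fin n, ∑ j : Fin n, ‖M i j‖ ^ 2 := by positivity
  rw [schatten2, Real.sq_sqrt h0]
  have e1 : ∑ i : Fin n, ∑ j : Fin n, ‖M i j‖ ^ 2
      = (n : ℝ)⁻¹ * ∑ i ∈ range n, ∑ j ∈ range n, g i j := by
    simp_rw [hM, ← Finset.mul_sum]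
    congr 1
    rw [← Fin.sum_univ_eq_sum_range (fun i => ∑ j ∈ range n, g i j)]
    exact Finset.sum_congr rfl fun i _ =>
      Fin.sum_univ_eq_sum_range (fun j => g i.val j) n
  rw [e1, sym_sum g hg n, ← sum_T g n]
  ring

end Stmt18

open Topology Stmt18 in
set_option maxHeartbeats 1000000 in
/-- With `Â_n = A_n − σ(c)·Ã_n`: almost surely
`lim_n ‖Â_n‖₂² = Var(X₁₂·𝟙_{|X₁₂|>c})` and almost surely `lim_n ‖Ã_n‖₂ = 1`. -/
theorem statement18 {Ω : Type*} [MeasurableSpace Ω] (P : Measure Ω) [IsProbabilityMeasure P]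
    (X : ℕ → ℕ → Ω → ℂ) (hX : IsWignerEntries P (fun _ : Fin 1 => X))
    (h4 : Integrable (fun ω => ‖X 0 1 ω‖ ^ 4) P)
    (h2 : Integrable (fun ω => ‖X 0 0 ω‖ ^ 2) P)
    (c : ℝ) (hc : 0 < c) (hσ : 0 < sigma2 P (X 0 1) c) :
    (∀ᵐ ω ∂P,
      Tendsto (fun n => schatten2 (wignerMat (fun _ : Fin 1 => X) 0 n ω -
            (Real.sqrt (sigma2 P (X 0 1) c) : ℂ) • truncMat P X c n ω) ^ 2)
        atTop (nhds (cVar P fun ω => truncAbove c (X 0 1 ω)))) ∧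
    (∀ᵐ ω ∂P,
      Tendsto (fun n => schatten2 (truncMat P X c n ω)) atTop (nhds 1)) := by
  classical
  set s2 : ℝ := sigma2 P (X 0 1) c with hs2def
  set MA : ℂ := ∫ ω', truncAbove c (X 0 1 ω') ∂P with hMAdef
  set MB : ℂ := ∫ ω', truncBelow c (X 0 1 ω') ∂P with hMBdef
  have hmeas : ∀ i j, Measurable (X i j) := fun i j => hX.meas 0 i j
  -- integrability of X 0 1 and of ‖X 0 1‖^2
  have hXint : Integrable (X 0 1) P := by
    refine Integrable.mono' ((integrable_const (1:ℝ)).add h4)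
      (hmeas 0 1).aestronglyMeasurable ?_
    filter_upwards with ω
    have ha : (0:ℝ) ≤ ‖X 0 1 ω‖ := norm_nonneg _
    simp only [Pi.add_apply]
    nlinarith [sq_nonneg (‖X 0 1 ω‖^2 - 1), sq_nonneg (‖X 0 1 ω‖ - 1), sq_nonneg (‖X 0 1 ω‖^2 - ‖X 0 1 ω‖)]
  have hsq_int : Integrable (fun ω => ‖X 0 1 ω‖^2) P := by
    refine Integrable.mono' ((integrable_const (1:ℝ)).add h4)
      ((hmeas 0 1).norm.pow_const 2).aestronglyMeasurable ?_
    filter_upwards with ω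
    have ha : (0:ℝ) ≤ ‖X 0 1 ω‖ := norm_nonneg _
    simp only [Pi.add_apply, Real.norm_eq_abs, abs_of_nonneg (by positivity : (0:ℝ) ≤ ‖X 0 1 ω‖^2)]
    nlinarith [sq_nonneg (‖X 0 1 ω‖^2 - 1)]
  -- identical distribution facts
  have identOff : ∀ i j, i < j → IdentDistrib (X i j) (X 0 1) P P := fun i j h =>
    ⟨(hmeas i j).aemeasurable, (hmeas 0 1).aemeasurable, hX.offdiag_distrib 0 i j h⟩
  have identDiag : ∀ i, IdentDistrib (X i i) (X 0 0) P P := fun i =>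
    ⟨(hmeas i i).aemeasurable, (hmeas 0 0).aemeasurable, hX.diag_distrib 0 i⟩
  have conj_eq : ∀ i j ω', X j i ω' = starRingEnd ℂ (X i j ω') := fun i j ω' => hX.herm 0 i j ω'
  -- integrability and zero mean for all off-diagonal entries
  have hint_off : ∀ i j, i ≠ j → Integrable (X i j) P := by
    intro i j hij
    rcases lt_or_gt_of_ne hij with h | h
    · exact (identOff i j h).integrable_iff.mpr hXint
    · have hji : Integrable (X j i) P := (identOff j i h).integrable_iff.mpr hXint
      refine Integrable.mono' hji.norm (Measurable.aestronglyMeasurable (hmeas i j)) ?_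
      filter_upwards with ω
      rw [conj_eq j i ω, RCLike.norm_conj]
  have hzero_off : ∀ i j, i ≠ j → ∫ ω', X i j ω' ∂P = 0 := by
    intro i j hij
    rcases lt_or_gt_of_ne hij with h | h
    · exact (identOff i j h).integral_eq.trans (hX.mean_zero 0)
    · have hji : ∫ ω', X j i ω' ∂P = 0 := (identOff j i h).integral_eq.trans (hX.mean_zero 0)
      calc ∫ ω', X i j ω' ∂P
          = ∫ ω', starRingEnd ℂ (X j i ω') ∂P :=
            integral_congr_ae (Filter.Eventually.of_forall fun ω' => conj_eq j i ω')
        _ = starRingEnd ℂ (∫ ω', X j i ω' ∂P) := integral_conj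
        _ = 0 := by rw [hji, map_zero]
  have hBint : ∀ i j, Integrable (fun ω' => truncBelow c (X i j ω')) P := by
    intro i j
    refine Integrable.mono' (integrable_const c)
      ((measurable_truncBelow c).comp (hmeas i j)).aestronglyMeasurable ?_
    filter_upwards with ω'
    exact norm_truncBelow_le hc.le (X i j ω')
  have hAint : ∀ i j, i ≠ j → Integrable (fun ω' => truncAbove c (X i j ω')) P := by
    intro i j hij
    refine Integrable.mono' (hint_off i j hij).norm
      ((measurable_truncAbove c).comp (hmeas i j)).aestronglyMeasurable ?_
    filter_upwards with ω'
    exact norm_truncAbove_le c (X i j ω')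
  have hsum0 : ∀ i j, i ≠ j →
      (∫ ω', truncBelow c (X i j ω') ∂P) + (∫ ω', truncAbove c (X i j ω') ∂P) = 0 := by
    intro i j hij
    rw [← integral_add (hBint i j) (hAint i j hij)]
    rw [← hzero_off i j hij]
    exact integral_congr_ae (Filter.Eventually.of_forall fun ω' =>
      truncBelow_add_truncAbove c (X i j ω'))
  have repr_off : ∀ i j, i ≠ j → ∀ ω',
      X i j ω' - (truncBelow c (X i j ω') - ∫ ω'', truncBelow c (X i j ω'') ∂P)
        = truncAbove c (X i j ω') - ∫ ω'', truncAbove c (X i j ω'') ∂P := by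
    intro i j hij ω'
    have h1 := truncBelow_add_truncAbove c (X i j ω')
    have h2 := hsum0 i j hij
    linear_combination h2 - h1
  -- integral transfers
  have hMA_eq : ∀ i j, i < j → ∫ ω', truncAbove c (X i j ω') ∂P = MA := fun i j h =>
    ((identOff i j h).comp (measurable_truncAbove c)).integral_eq
  have hMB_eq : ∀ i j, i < j → ∫ ω', truncBelow c (X i j ω') ∂P = MB := fun i j h =>
    ((identOff i j h).comp (measurable_truncBelow c)).integral_eq
  have hconjA : ∀ i j, ∫ ω', truncAbove c (X j i ω') ∂P
      = starRingEnd ℂ (∫ ω', truncAbove c (X i j ω') ∂P) := by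
    intro i j
    rw [← integral_conj]
    exact integral_congr_ae (Filter.Eventually.of_forall fun ω' => by
      show truncAbove c (X j i ω') = starRingEnd ℂ (truncAbove c (X i j ω'))
      rw [conj_eq i j ω', truncAbove_conj])
  have hconjB : ∀ i j, ∫ ω', truncBelow c (X j i ω') ∂P
      = starRingEnd ℂ (∫ ω', truncBelow c (X i j ω') ∂P) := by
    intro i j
    rw [← integral_conj]
    exact integral_congr_ae (Filter.Eventually.of_forall fun ω' => by
      show truncBelow c (X j i ω') = starRingEnd ℂ (truncBelow c (X i j ω'))
      rw [conj_eq i j ω', truncBelow_conj])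
  -- scalar norm computation
  have hsc : ∀ (r : ℝ), 0 ≤ r → ∀ z : ℂ, ‖((Real.sqrt r : ℝ) : ℂ)⁻¹ * z‖^2 = r⁻¹ * ‖z‖^2 := by
    intro r hr z
    rw [norm_mul, norm_inv, Complex.norm_real, Real.norm_eq_abs,
      abs_of_nonneg (Real.sqrt_nonneg _), mul_pow, inv_pow, Real.sq_sqrt hr]
  have hs2c_ne : ((Real.sqrt s2 : ℝ) : ℂ) ≠ 0 := by
    exact_mod_cast Complex.ofReal_ne_zero.mpr (Real.sqrt_pos.mpr hσ).ne'
  -- entry computations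
  have entryA : ∀ (n : ℕ) (i j : Fin n) (ω' : Ω),
      ‖(wignerMat (fun _ : Fin 1 => X) 0 n ω' - (Real.sqrt s2 : ℂ) • truncMat P X c n ω') i j‖^2
        = (n:ℝ)⁻¹ * (if (i:ℕ) = (j:ℕ) then ‖X i.val i.val ω'‖^2
            else ‖truncAbove c (X i.val j.val ω') - ∫ ω'', truncAbove c (X i.val j.val ω'') ∂P‖^2) := by
    intro n i j ω'
    by_cases h : i = j
    · subst h
      have hz : (truncMat P X c n ω') i i = 0 := by simp [truncMat]
      rw [Matrix.sub_apply, Matrix.smul_apply, hz, smul_zero, if_pos rfl, sub_zero]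
      show ‖(Real.sqrt (n:ℝ) : ℂ)⁻¹ * X i.val i.val ω'‖^2 = ((n:ℝ))⁻¹ * ‖X i.val i.val ω'‖^2
      exact hsc n (Nat.cast_nonneg n) _
    · have hne : (i:ℕ) ≠ (j:ℕ) := fun hh => h (Fin.ext hh)
      simp only [Matrix.sub_apply, Matrix.smul_apply, wignerMat, truncMat, Matrix.of_apply]
      rw [if_neg h, if_neg hne, ← hs2def, smul_eq_mul]
      have e : ∀ w : ℂ, ((Real.sqrt s2 : ℝ) : ℂ) * ((Real.sqrt (n:ℝ) : ℂ)⁻¹ * ((Real.sqrt s2 : ℝ) : ℂ)⁻¹ * w)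
          = (Real.sqrt (n:ℝ) : ℂ)⁻¹ * w := by
        intro w
        rw [show ((Real.sqrt s2 : ℝ):ℂ) * ((Real.sqrt (n:ℝ) : ℂ)⁻¹ * ((Real.sqrt s2 : ℝ):ℂ)⁻¹ * w)
            = (((Real.sqrt s2 : ℝ):ℂ) * ((Real.sqrt s2 : ℝ):ℂ)⁻¹) * ((Real.sqrt (n:ℝ):ℂ)⁻¹ * w) from by ring,
          mul_inv_cancel₀ hs2c_ne, one_mul]
      rw [e, ← mul_sub, hsc n (Nat.cast_nonneg n), repr_off i.val j.val hne ω']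
  have entryB : ∀ (n : ℕ) (i j : Fin n) (ω' : Ω),
      ‖(truncMat P X c n ω') i j‖^2
        = (n:ℝ)⁻¹ * (if (i:ℕ) = (j:ℕ) then 0
            else s2⁻¹ * ‖truncBelow c (X i.val j.val ω') - ∫ ω'', truncBelow c (X i.val j.val ω'') ∂P‖^2) := by
    intro n i j ω'
    by_cases h : i = j
    · subst h
      have hz : (truncMat P X c n ω') i i = 0 := by simp [truncMat]
      simp [hz]
    · have hne : (i:ℕ) ≠ (j:ℕ) := fun hh => h (Fin.ext hh)
      simp only [truncMat, Matrix.of_apply]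
      rw [if_neg h, if_neg hne, ← hs2def, mul_assoc, hsc n (Nat.cast_nonneg n), hsc s2 hσ.le]
  -- symmetry of the summands
  have gA_symm : ∀ (ω' : Ω) (i j : ℕ),
      (if i = j then ‖X i i ω'‖^2
        else ‖truncAbove c (X i j ω') - ∫ ω'', truncAbove c (X i j ω'') ∂P‖^2)
      = (if j = i then ‖X j j ω'‖^2
        else ‖truncAbove c (X j i ω') - ∫ ω'', truncAbove c (X j i ω'') ∂P‖^2) := by
    intro ω' i j
    by_cases h : i = j
    · subst h; rfl
    · rw [if_neg h, if_neg (Ne.symm h), conj_eq i j ω', truncAbove_conj, hconjA i j,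
        ← map_sub, RCLike.norm_conj]
  have gB_symm : ∀ (ω' : Ω) (i j : ℕ),
      (if i = j then (0:ℝ)
        else s2⁻¹ * ‖truncBelow c (X i j ω') - ∫ ω'', truncBelow c (X i j ω'') ∂P‖^2)
      = (if j = i then (0:ℝ)
        else s2⁻¹ * ‖truncBelow c (X j i ω') - ∫ ω'', truncBelow c (X j i ω'') ∂P‖^2) := by
    intro ω' i j
    by_cases h : i = j
    · subst h; rfl
    · rw [if_neg h, if_neg (Ne.symm h), conj_eq i j ω', truncBelow_conj, hconjB i j,
        ← map_sub, RCLike.norm_conj]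
  -- key identities
  have keyA : ∀ (ω' : Ω) (n : ℕ),
      schatten2 (wignerMat (fun _ : Fin 1 => X) 0 n ω'
          - (Real.sqrt s2 : ℂ) • truncMat P X c n ω') ^ 2
        = ((n:ℝ) * n)⁻¹ * ((∑ i ∈ range n, ‖X i i ω'‖^2)
            + 2 * ∑ k ∈ range (T n), ‖truncAbove c (X (iOf k) (jOf k) ω') - MA‖^2) := by
    intro ω' n
    rw [schatten2_sq _ (fun i j => if i = j then ‖X i i ω'‖^2
        else ‖truncAbove c (X i j ω') - ∫ ω'', truncAbove c (X i j ω'') ∂P‖^2)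
      (fun i j => entryA n i j ω') (fun i j => gA_symm ω' i j)]
    congr 1
    congr 1
    · exact Finset.sum_congr rfl fun i _ => if_pos rfl
    · congr 1
      refine Finset.sum_congr rfl fun k _ => ?_
      rw [if_neg (iOf_lt_jOf k).ne, hMA_eq _ _ (iOf_lt_jOf k)]
  have keyB : ∀ (ω' : Ω) (n : ℕ),
      schatten2 (truncMat P X c n ω') ^ 2
        = ((n:ℝ) * n)⁻¹ * (0
            + 2 * ∑ k ∈ range (T n), s2⁻¹ * ‖truncBelow c (X (iOf k) (jOf k) ω') - MB‖^2) := by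
    intro ω' n
    rw [schatten2_sq _ (fun i j => if i = j then (0:ℝ)
        else s2⁻¹ * ‖truncBelow c (X i j ω') - ∫ ω'', truncBelow c (X i j ω'') ∂P‖^2)
      (fun i j => entryB n i j ω') (fun i j => gB_symm ω' i j)]
    congr 1
    congr 1
    · exact Finset.sum_eq_zero fun i _ => if_pos rfl
    · congr 1
      refine Finset.sum_congr rfl fun k _ => ?_
      rw [if_neg (iOf_lt_jOf k).ne, hMB_eq _ _ (iOf_lt_jOf k)]
  -- independence of entries
  have indep_pair : ∀ (p q : ℕ × ℕ), p.1 ≤ p.2 → q.1 ≤ q.2 → p ≠ q →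
      IndepFun (X p.1 p.2) (X q.1 q.2) P := by
    intro p q hp hq hne
    exact hX.indep.indepFun (i := ((0 : Fin 1), ⟨p, hp⟩)) (j := ((0 : Fin 1), ⟨q, hq⟩))
      (by simp only [ne_eq, Prod.mk.injEq, Subtype.mk.injEq, not_and]; exact fun _ h => hne h)
  have hnormsq : Measurable (fun z : ℂ => ‖z‖^2) := measurable_norm.pow_const 2
  -- strong law for the diagonal
  have slW : ∀ᵐ ω ∂P, Tendsto (fun n : ℕ => (∑ i ∈ range n, ‖X i i ω‖^2) / n) atTop
      (𝓝 (∫ ω', ‖X 0 0 ω'‖^2 ∂P)) := by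
    refine strong_law_ae_real (fun i ω' => ‖X i i ω'‖^2) h2 ?_ ?_
    · intro i j hij
      exact (indep_pair (i,i) (j,j) le_rfl le_rfl (by simpa [Prod.ext_iff] using hij)).comp
        hnormsq hnormsq
    · intro i
      exact (identDiag i).comp hnormsq
  -- strong law for the above-truncation off-diagonal array
  have φA_meas : Measurable (fun z : ℂ => ‖truncAbove c z - MA‖^2) :=
    (((measurable_truncAbove c).sub_const MA).norm.pow_const 2)
  have baseA : ∀ k : ℕ, IdentDistrib (fun ω' => ‖truncAbove c (X (iOf k) (jOf k) ω') - MA‖^2)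
      (fun ω' => ‖truncAbove c (X 0 1 ω') - MA‖^2) P P :=
    fun k => (identOff _ _ (iOf_lt_jOf k)).comp φA_meas
  have intA01 : Integrable (fun ω' => ‖truncAbove c (X 0 1 ω') - MA‖^2) P := by
    refine Integrable.mono' ((hsq_int.const_mul 2).add (integrable_const (2*‖MA‖^2)))
      (φA_meas.comp (hmeas 0 1)).aestronglyMeasurable ?_
    filter_upwards with ω'
    have h1 : ‖truncAbove c (X 0 1 ω') - MA‖ ≤ ‖X 0 1 ω'‖ + ‖MA‖ :=
      (norm_sub_le _ _).trans (add_le_add (norm_truncAbove_le _ _) le_rfl)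
    have h0 := norm_nonneg (truncAbove c (X 0 1 ω') - MA)
    have h2' := norm_nonneg (X 0 1 ω')
    have h3' := norm_nonneg MA
    rw [Real.norm_eq_abs, abs_of_nonneg (by positivity)]
    simp only [Pi.add_apply]
    nlinarith [sq_nonneg (‖X 0 1 ω'‖ - ‖MA‖)]
  have hlimA : ∫ ω', ‖truncAbove c (X (iOf 0) (jOf 0) ω') - MA‖^2 ∂P
      = cVar P (fun ω'' => truncAbove c (X 0 1 ω'')) := by
    rw [(baseA 0).integral_eq]
    simp only [cVar, ← hMAdef]
  have slA : ∀ᵐ ω ∂P, Tendsto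
      (fun N : ℕ => (∑ k ∈ range N, ‖truncAbove c (X (iOf k) (jOf k) ω) - MA‖^2) / N)
      atTop (𝓝 (cVar P fun ω'' => truncAbove c (X 0 1 ω''))) := by
    rw [← hlimA]
    refine strong_law_ae_real (fun k ω' => ‖truncAbove c (X (iOf k) (jOf k) ω') - MA‖^2)
      ((baseA 0).integrable_iff.mpr intA01) ?_ ?_
    · intro k l hkl
      have hpq : (iOf k, jOf k) ≠ (iOf l, jOf l) := by
        intro hEq
        exact hkl (enc_injective (congrArg Prod.fst hEq) (congrArg Prod.snd hEq))
      exact (indep_pair _ _ (iOf_lt_jOf k).le (iOf_lt_jOf l).le hpq).comp φA_meas φA_meas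
    · intro k
      exact (baseA k).trans (baseA 0).symm
  -- strong law for the below-truncation off-diagonal array
  have φB_meas : Measurable (fun z : ℂ => s2⁻¹ * ‖truncBelow c z - MB‖^2) :=
    ((((measurable_truncBelow c).sub_const MB).norm.pow_const 2).const_mul s2⁻¹)
  have baseB : ∀ k : ℕ,
      IdentDistrib (fun ω' => s2⁻¹ * ‖truncBelow c (X (iOf k) (jOf k) ω') - MB‖^2)
      (fun ω' => s2⁻¹ * ‖truncBelow c (X 0 1 ω') - MB‖^2) P P :=
    fun k => (identOff _ _ (iOf_lt_jOf k)).comp φB_meas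
  have intB01 : Integrable (fun ω' => s2⁻¹ * ‖truncBelow c (X 0 1 ω') - MB‖^2) P := by
    refine Integrable.mono' (integrable_const (s2⁻¹ * (c + ‖MB‖)^2))
      (φB_meas.comp (hmeas 0 1)).aestronglyMeasurable ?_
    filter_upwards with ω'
    have h1 : ‖truncBelow c (X 0 1 ω') - MB‖ ≤ c + ‖MB‖ :=
      (norm_sub_le _ _).trans (add_le_add (norm_truncBelow_le hc.le _) le_rfl)
    have h0 := norm_nonneg (truncBelow c (X 0 1 ω') - MB)
    have hs2inv : (0:ℝ) ≤ s2⁻¹ := (inv_nonneg).mpr hσ.le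
    rw [Real.norm_eq_abs, abs_of_nonneg (by positivity)]
    have : ‖truncBelow c (X 0 1 ω') - MB‖^2 ≤ (c + ‖MB‖)^2 := by nlinarith
    nlinarith
  have hlimB : ∫ ω', s2⁻¹ * ‖truncBelow c (X (iOf 0) (jOf 0) ω') - MB‖^2 ∂P = 1 := by
    rw [(baseB 0).integral_eq, integral_const_mul]
    have hval : ∫ ω', ‖truncBelow c (X 0 1 ω') - MB‖^2 ∂P = s2 := by
      rw [hs2def]
      simp only [sigma2, cVar, ← hMBdef]
    rw [hval, inv_mul_cancel₀ hσ.ne']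
  have slB : ∀ᵐ ω ∂P, Tendsto
      (fun N : ℕ => (∑ k ∈ range N, s2⁻¹ * ‖truncBelow c (X (iOf k) (jOf k) ω) - MB‖^2) / N)
      atTop (𝓝 (1:ℝ)) := by
    rw [← hlimB]
    refine strong_law_ae_real (fun k ω' => s2⁻¹ * ‖truncBelow c (X (iOf k) (jOf k) ω') - MB‖^2)
      ((baseB 0).integrable_iff.mpr intB01) ?_ ?_
    · intro k l hkl
      have hpq : (iOf k, jOf k) ≠ (iOf l, jOf l) := by
        intro hEq
        exact hkl (enc_injective (congrArg Prod.fst hEq) (congrArg Prod.snd hEq))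
      exact (indep_pair _ _ (iOf_lt_jOf k).le (iOf_lt_jOf l).le hpq).comp φB_meas φB_meas
    · intro k
      exact (baseB k).trans (baseB 0).symm
  -- final assembly
  constructor
  · filter_upwards [slW, slA] with ω hW hA
    have h := lim_combine (fun n => ∑ i ∈ range n, ‖X i i ω‖^2)
      (fun N => ∑ k ∈ range N, ‖truncAbove c (X (iOf k) (jOf k) ω) - MA‖^2)
      (∫ ω', ‖X 0 0 ω'‖^2 ∂P) (cVar P fun ω'' => truncAbove c (X 0 1 ω'')) hW hA
    exact h.congr fun n => (keyA ω n).symm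
  · filter_upwards [slB] with ω hB
    have hD : Tendsto (fun n : ℕ => (0:ℝ) / n) atTop (𝓝 (0:ℝ)) := by
      simp only [zero_div]
      exact tendsto_const_nhds
    have h := lim_combine (fun _ => (0:ℝ))
      (fun N => ∑ k ∈ range N, s2⁻¹ * ‖truncBelow c (X (iOf k) (jOf k) ω) - MB‖^2)
      0 1 hD hB
    have hsq : Tendsto (fun n => schatten2 (truncMat P X c n ω) ^ 2) atTop (𝓝 (1:ℝ)) :=
      h.congr fun n => (keyB ω n).symm
    have hcont := (Real.continuous_sqrt.tendsto 1).comp hsq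
    rw [Real.sqrt_one] at hcont
    refine hcont.congr fun n => ?_
    exact Real.sqrt_sq (Real.sqrt_nonneg _)
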